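/- Let A be an m×n real matrix, B an n×n real matrix, and C an n×r real matrix. Then ‖A B C‖_max ≤ √n · ‖A‖_max · ‖B‖₂ · ‖C‖_F. -/

import Mathlib

open Matrix

/-- Entrywise maximum (max) norm of a real matrix. -/
noncomputable def maxNorm {m n : ℕ} (A : Matrix (Fin m) (Fin n) ℝ) : ℝ :=
  ⨆ i, ⨆ j, |A i j|

/-- Frobenius norm of a real matrix. -/
noncomputable def frobNorm {m n : ℕ} (A : Matrix (Fin m) (Fin n) ℝ) : ℝ :=
  Real.sqrt (∑ i, ∑ j, (A i j) ^ 2)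

/-- Spectral (operator) norm of a real matrix, i.e. the operator norm of the induced
linear map between Euclidean spaces. -/
noncomputable def specNorm {m n : ℕ} (A : Matrix (Fin m) (Fin n) ℝ) : ℝ :=
  ‖LinearMap.toContinuousLinearMap (Matrix.toEuclideanLin A)‖

lemma maxNorm_nonneg {m n : ℕ} (A : Matrix (Fin m) (Fin n) ℝ) : 0 ≤ maxNorm A := by
  unfold maxNorm
  apply Real.iSup_nonneg; intro i
  exact Real.iSup_nonneg fun j => abs_nonneg _

lemma abs_le_maxNorm {m n : ℕ} (A : Matrix (Fin m) (Fin n) ℝ) (i : Fin m) (j : Fin n) :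
    |A i j| ≤ maxNorm A := by
  unfold maxNorm
  refine le_trans (le_ciSup (f := fun j => |A i j|) (Set.Finite.bddAbove (Set.finite_range _)) j)
    (le_ciSup (f := fun i => ⨆ j, |A i j|) (Set.Finite.bddAbove (Set.finite_range _)) i)

lemma entry_bound {m n r : ℕ}
    (A : Matrix (Fin m) (Fin n) ℝ)
    (B : Matrix (Fin n) (Fin n) ℝ)
    (C : Matrix (Fin n) (Fin r) ℝ) (i : Fin m) (k : Fin r) :
    |(A * B * C) i k| ≤ Real.sqrt n * maxNorm A * specNorm B * frobNorm C := by
  set u : EuclideanSpace ℝ (Fin n) := (WithLp.equiv 2 _).symm (fun l => A i l) with hu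
  set v : EuclideanSpace ℝ (Fin n) := (WithLp.equiv 2 _).symm (fun j => C j k) with hv
  have hentry : (A * B * C) i k = (inner ℝ u (Matrix.toEuclideanLin B v) : ℝ) := by
    simp only [Matrix.toEuclideanLin_apply, PiLp.inner_apply, RCLike.inner_apply, conj_trivial,
      hu, hv, WithLp.equiv_symm_apply, PiLp.toLp_apply, Matrix.mulVec, dotProduct, Matrix.mul_apply]
    simp only [Equiv.apply_symm_apply, WithLp.ofLp_toLp, Finset.sum_mul, Finset.mul_sum]
    rw [Finset.sum_comm]
    exact Finset.sum_congr rfl fun j _ => Finset.sum_congr rfl fun l _ => by ring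
  have hcs : |(A * B * C) i k| ≤ ‖u‖ * ‖Matrix.toEuclideanLin B v‖ := by
    rw [hentry]; exact abs_real_inner_le_norm _ _
  have hB : ‖Matrix.toEuclideanLin B v‖ ≤ specNorm B * ‖v‖ :=
    (LinearMap.toContinuousLinearMap (Matrix.toEuclideanLin B)).le_opNorm v
  have hun : ‖u‖ ≤ Real.sqrt n * maxNorm A := by
    rw [EuclideanSpace.norm_eq]
    rw [show Real.sqrt n * maxNorm A = Real.sqrt (n * (maxNorm A)^2) by
      rw [Real.sqrt_mul (Nat.cast_nonneg n), Real.sqrt_sq (maxNorm_nonneg A)]]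
    apply Real.sqrt_le_sqrt
    calc ∑ l, ‖u l‖ ^ 2 ≤ ∑ _l : Fin n, (maxNorm A)^2 := by
          apply Finset.sum_le_sum; intro l _
          have : ‖u l‖ = |A i l| := by simp [hu]
          rw [this]
          exact pow_le_pow_left₀ (abs_nonneg _) (abs_le_maxNorm A i l) 2
      _ = n * (maxNorm A)^2 := by simp [Finset.sum_const]
  have hvn : ‖v‖ ≤ frobNorm C := by
    rw [EuclideanSpace.norm_eq]
    apply Real.sqrt_le_sqrt
    calc ∑ j, ‖v j‖ ^ 2 = ∑ j, (C j k)^2 := by simp [hv, sq_abs]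
      _ ≤ ∑ j, ∑ k', (C j k')^2 := by
          apply Finset.sum_le_sum; intro j _
          exact Finset.single_le_sum (f := fun k' => (C j k')^2) (fun k' _ => sq_nonneg _) (Finset.mem_univ k)
  calc |(A * B * C) i k| ≤ ‖u‖ * ‖Matrix.toEuclideanLin B v‖ := hcs
    _ ≤ ‖u‖ * (specNorm B * ‖v‖) := by
        apply mul_le_mul_of_nonneg_left hB (norm_nonneg u)
    _ ≤ (Real.sqrt n * maxNorm A) * (specNorm B * frobNorm C) := by
        apply mul_le_mul hun
        · exact mul_le_mul_of_nonneg_left hvn (norm_nonneg _)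
        · exact mul_nonneg (norm_nonneg _) (norm_nonneg _)
        · exact mul_nonneg (Real.sqrt_nonneg _) (maxNorm_nonneg A)
    _ = Real.sqrt n * maxNorm A * specNorm B * frobNorm C := by ring

/-- For an `m × n` matrix `A`, an `n × n` matrix `B` and an `n × r`
matrix `C`, `‖A B C‖_max ≤ √n ‖A‖_max ‖B‖₂ ‖C‖_F`. -/
theorem stmt8 (m n r : ℕ)
    (A : Matrix (Fin m) (Fin n) ℝ)
    (B : Matrix (Fin n) (Fin n) ℝ)
    (C : Matrix (Fin n) (Fin r) ℝ) :
    maxNorm (A * B * C) ≤ Real.sqrt n * maxNorm A * specNorm B * frobNorm C := by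
  have hK : (0:ℝ) ≤ Real.sqrt n * maxNorm A * specNorm B * frobNorm C := by
    have ha := maxNorm_nonneg A
    have hb : (0:ℝ) ≤ specNorm B := norm_nonneg _
    have hc : (0:ℝ) ≤ frobNorm C := Real.sqrt_nonneg _
    positivity
  unfold maxNorm
  apply Real.iSup_le _ hK
  intro i
  apply Real.iSup_le _ hK
  intro k
  exact entry_bound A B C i k
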